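/- Let U, X ∈ ℝ^{n₁×r} and V, Y ∈ ℝ^{n₂×r}, and write W = [U; V], Z = [X; Y] (vertical concatenation). If dist(W, Z) ≤ (1/4)‖Z‖_{op}, then ‖UVᵀ − XYᵀ‖_F ≤ (9/(4√2))·‖Z‖_{op}·dist(W, Z). -/

import Mathlib

open Matrix

noncomputable def vnorm {ι : Type*} [Fintype ι] (v : ι → ℝ) : ℝ :=
  Real.sqrt (∑ i, v i ^ 2)

noncomputable def frob {α β : Type*} [Fintype α] [Fintype β] (M : Matrix α β ℝ) : ℝ :=
  Real.sqrt (∑ i, ∑ j, M i j ^ 2)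

noncomputable def sval {α β : Type*} [Fintype α] [Fintype β] (M : Matrix α β ℝ) (k : ℕ) : ℝ :=
  sSup { t : ℝ | ∃ V : Submodule ℝ (β → ℝ), Module.finrank ℝ V = k ∧
    ∀ v ∈ V, t * vnorm v ≤ vnorm (M.mulVec v) }

noncomputable def opNorm {α β : Type*} [Fintype α] [Fintype β] (M : Matrix α β ℝ) : ℝ :=
  sval M 1

noncomputable def pdist {α ρ : Type*} [Fintype α] [Fintype ρ] [DecidableEq ρ]
    (U X : Matrix α ρ ℝ) : ℝ :=
  sInf { d : ℝ | ∃ R : Matrix ρ ρ ℝ, Rᵀ * R = 1 ∧ d = frob (U - X * R) }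

noncomputable def mip {α β : Type*} [Fintype α] [Fintype β] (A B : Matrix α β ℝ) : ℝ :=
  ∑ i, ∑ j, A i j * B i j

noncomputable def mapA {m : ℕ} {α β : Type*} [Fintype α] [Fintype β]
    (A : Fin m → Matrix α β ℝ) (Z : Matrix α β ℝ) : Fin m → ℝ :=
  fun k => mip (A k) Z

def HasRIP {m n₁ n₂ : ℕ} (A : Fin m → Matrix (Fin n₁) (Fin n₂) ℝ) (s : ℕ) (δ : ℝ) : Prop :=
  ∀ Z : Matrix (Fin n₁) (Fin n₂) ℝ, Z.rank ≤ s →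
    (1 - δ) * frob Z ^ 2 ≤ ∑ k, mapA A Z k ^ 2 ∧
      ∑ k, mapA A Z k ^ 2 ≤ (1 + δ) * frob Z ^ 2

noncomputable def gradU {m n₁ n₂ r : ℕ} (A : Fin m → Matrix (Fin n₁) (Fin n₂) ℝ)
    (M : Matrix (Fin n₁) (Fin n₂) ℝ)
    (U : Matrix (Fin n₁) (Fin r) ℝ) (V : Matrix (Fin n₂) (Fin r) ℝ) :
    Matrix (Fin n₁) (Fin r) ℝ :=
  (∑ k, mip (A k) (U * Vᵀ - M) • (A k * V)) + (1 / 4 : ℝ) • (U * (Uᵀ * U - Vᵀ * V))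

noncomputable def gradV {m n₁ n₂ r : ℕ} (A : Fin m → Matrix (Fin n₁) (Fin n₂) ℝ)
    (M : Matrix (Fin n₁) (Fin n₂) ℝ)
    (U : Matrix (Fin n₁) (Fin r) ℝ) (V : Matrix (Fin n₂) (Fin r) ℝ) :
    Matrix (Fin n₂) (Fin r) ℝ :=
  (∑ k, mip (A k) (U * Vᵀ - M) • ((A k)ᵀ * U)) + (1 / 4 : ℝ) • (V * (Vᵀ * V - Uᵀ * U))

noncomputable def gradg {m n₁ n₂ r : ℕ} (A : Fin m → Matrix (Fin n₁) (Fin n₂) ℝ)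
    (M : Matrix (Fin n₁) (Fin n₂) ℝ)
    (U : Matrix (Fin n₁) (Fin r) ℝ) (V : Matrix (Fin n₂) (Fin r) ℝ) :
    Matrix (Fin n₁ ⊕ Fin n₂) (Fin r) ℝ :=
  Matrix.fromRows (gradU A M U V) (gradV A M U V)

section hlp
variable {ι α β γ : Type*} [Fintype ι] [Fintype α] [Fintype β] [Fintype γ]

lemma vnorm_nonneg (v : ι → ℝ) : 0 ≤ vnorm v := Real.sqrt_nonneg _

lemma vnorm_sq (v : ι → ℝ) : vnorm v ^ 2 = ∑ i, v i ^ 2 :=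
  Real.sq_sqrt (Finset.sum_nonneg fun i _ => sq_nonneg _)

lemma vnorm_zero : vnorm (0 : ι → ℝ) = 0 := by simp [vnorm]

lemma vnorm_smul (c : ℝ) (v : ι → ℝ) : vnorm (c • v) = |c| * vnorm v := by
  simp only [vnorm, Pi.smul_apply, smul_eq_mul, mul_pow, ← Finset.mul_sum]
  rw [Real.sqrt_mul (sq_nonneg c), Real.sqrt_sq_eq_abs]

lemma vnorm_pos {v : ι → ℝ} (hv : v ≠ 0) : 0 < vnorm v := by
  rcases Function.ne_iff.mp hv with ⟨i, hi⟩
  have h2 : (0:ℝ) < v i ^ 2 := by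
    have := abs_pos.mpr hi
    nlinarith [sq_abs (v i)]
  exact Real.sqrt_pos.mpr <| Finset.sum_pos'
    (fun j _ => sq_nonneg _) ⟨i, Finset.mem_univ i, h2⟩

lemma frob_nonneg (M : Matrix α β ℝ) : 0 ≤ frob M := Real.sqrt_nonneg _

lemma frob_sq (M : Matrix α β ℝ) : frob M ^ 2 = ∑ i, ∑ j, M i j ^ 2 :=
  Real.sq_sqrt (Finset.sum_nonneg fun i _ => Finset.sum_nonneg fun j _ => sq_nonneg _)

noncomputable def toE (M : Matrix α β ℝ) : EuclideanSpace ℝ (α × β) := WithLp.toLp 2 (fun p : α × β => M p.1 p.2)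

lemma frob_eq_norm (M : Matrix α β ℝ) : frob M = ‖toE M‖ := by
  rw [EuclideanSpace.norm_eq]
  simp [frob, toE, Fintype.sum_prod_type, Real.norm_eq_abs, sq_abs]

lemma frob_add_le (A B : Matrix α β ℝ) : frob (A + B) ≤ frob A + frob B := by
  rw [frob_eq_norm, frob_eq_norm, frob_eq_norm]
  have h : toE (A + B) = toE A + toE B := rfl
  rw [h]; exact norm_add_le _ _

lemma frob_transpose (M : Matrix α β ℝ) : frob Mᵀ = frob M := by
  simp only [frob, transpose_apply]
  rw [Finset.sum_comm]

lemma vnorm_mulVec_le_frob (M : Matrix α β ℝ) (v : β → ℝ) :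
    vnorm (M.mulVec v) ≤ frob M * vnorm v := by
  have key : ∑ i, (M.mulVec v i) ^ 2 ≤ (∑ i, ∑ j, M i j ^ 2) * ∑ j, v j ^ 2 := by
    rw [Finset.sum_mul]
    apply Finset.sum_le_sum
    intro i _
    have := Finset.sum_mul_sq_le_sq_mul_sq Finset.univ (fun j => M i j) v
    simpa [Matrix.mulVec, dotProduct] using this
  calc vnorm (M.mulVec v) = Real.sqrt (∑ i, (M.mulVec v i) ^ 2) := rfl
    _ ≤ Real.sqrt ((∑ i, ∑ j, M i j ^ 2) * ∑ j, v j ^ 2) := Real.sqrt_le_sqrt key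
    _ = frob M * vnorm v := by
        rw [Real.sqrt_mul (Finset.sum_nonneg fun i _ => Finset.sum_nonneg fun j _ => sq_nonneg _ : (0:ℝ) ≤ ∑ i, ∑ j, M i j ^ 2)]
        rfl

lemma vnorm_mulVec_le_opNorm (M : Matrix α β ℝ) (v : β → ℝ) :
    vnorm (M.mulVec v) ≤ opNorm M * vnorm v := by
  rcases eq_or_ne v 0 with rfl | hv
  · simp [Matrix.mulVec_zero, vnorm_zero]
  · have hvp : 0 < vnorm v := vnorm_pos hv
    have hbdd : BddAbove { t : ℝ | ∃ V : Submodule ℝ (β → ℝ), Module.finrank ℝ V = 1 ∧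
        ∀ w ∈ V, t * vnorm w ≤ vnorm (M.mulVec w) } := by
      refine ⟨frob M, fun t ht => ?_⟩
      obtain ⟨Vs, hr, hV⟩ := ht
      obtain ⟨w, hwV, hw0⟩ := Submodule.exists_mem_ne_zero_of_ne_bot
        (p := Vs) (by intro hb; rw [hb] at hr; simp at hr)
      have h1 := hV w hwV
      have h2 := vnorm_mulVec_le_frob M w
      have hwp := vnorm_pos hw0
      nlinarith
    have hmem : vnorm (M.mulVec v) / vnorm v ∈ { t : ℝ | ∃ V : Submodule ℝ (β → ℝ),
        Module.finrank ℝ V = 1 ∧ ∀ w ∈ V, t * vnorm w ≤ vnorm (M.mulVec w) } := by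
      refine ⟨Submodule.span ℝ {v}, finrank_span_singleton hv, ?_⟩
      intro w hw
      obtain ⟨c, rfl⟩ := Submodule.mem_span_singleton.mp hw
      rw [Matrix.mulVec_smul, vnorm_smul, vnorm_smul]
      apply le_of_eq
      field_simp
    have hle : vnorm (M.mulVec v) / vnorm v ≤ opNorm M := le_csSup hbdd hmem
    calc vnorm (M.mulVec v) = vnorm (M.mulVec v) / vnorm v * vnorm v := by field_simp
      _ ≤ opNorm M * vnorm v := mul_le_mul_of_nonneg_right hle hvp.le

lemma frob_mul_transpose_le_op (A : Matrix α γ ℝ) (B : Matrix β γ ℝ) {c : ℝ} (hc : 0 ≤ c)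
    (hA : ∀ w : γ → ℝ, vnorm (A.mulVec w) ≤ c * vnorm w) :
    frob (A * Bᵀ) ≤ c * frob B := by
  have key : ∀ i j, (A * Bᵀ) i j = A.mulVec (B j) i := by
    intro i j; simp [Matrix.mul_apply, Matrix.mulVec, dotProduct]
  have h1 : ∑ i, ∑ j, ((A * Bᵀ) i j) ^ 2 = ∑ j, ∑ i, (A.mulVec (B j) i) ^ 2 := by
    rw [Finset.sum_comm]
    exact Finset.sum_congr rfl fun j _ => Finset.sum_congr rfl fun i _ => by rw [key]
  have h2 : ∀ j : β, ∑ i, (A.mulVec (B j) i) ^ 2 ≤ c ^ 2 * ∑ k, B j k ^ 2 := by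
    intro j
    have h3 := hA (B j)
    have h4 : vnorm (A.mulVec (B j)) ^ 2 ≤ (c * vnorm (B j)) ^ 2 := by
      nlinarith [vnorm_nonneg (A.mulVec (B j)), mul_nonneg hc (vnorm_nonneg (B j))]
    rw [vnorm_sq, mul_pow, vnorm_sq] at h4
    exact h4
  have h5 : ∑ i, ∑ j, ((A * Bᵀ) i j) ^ 2 ≤ c ^ 2 * ∑ j, ∑ k, B j k ^ 2 := by
    rw [h1, Finset.mul_sum]
    exact Finset.sum_le_sum fun j _ => h2 j
  calc frob (A * Bᵀ) = Real.sqrt (∑ i, ∑ j, ((A * Bᵀ) i j) ^ 2) := rfl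
    _ ≤ Real.sqrt (c ^ 2 * ∑ j, ∑ k, B j k ^ 2) := Real.sqrt_le_sqrt h5
    _ = c * frob B := by
        rw [Real.sqrt_mul (sq_nonneg c), Real.sqrt_sq hc]; rfl

lemma frob_mul_transpose_le_frob (A : Matrix α γ ℝ) (B : Matrix β γ ℝ) :
    frob (A * Bᵀ) ≤ frob A * frob B := by
  have key : ∑ i, ∑ j, ((A * Bᵀ) i j) ^ 2 ≤ (∑ i, ∑ k, A i k ^ 2) * ∑ j, ∑ k, B j k ^ 2 := by
    rw [Finset.sum_mul]
    apply Finset.sum_le_sum; intro i _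
    rw [Finset.mul_sum]
    apply Finset.sum_le_sum; intro j _
    have := Finset.sum_mul_sq_le_sq_mul_sq Finset.univ (fun k => A i k) (fun k => B j k)
    simpa [Matrix.mul_apply, Matrix.transpose_apply] using this
  calc frob (A * Bᵀ) = Real.sqrt (∑ i, ∑ j, ((A * Bᵀ) i j) ^ 2) := rfl
    _ ≤ Real.sqrt ((∑ i, ∑ k, A i k ^ 2) * ∑ j, ∑ k, B j k ^ 2) := Real.sqrt_le_sqrt key
    _ = frob A * frob B := by
        rw [Real.sqrt_mul (Finset.sum_nonneg fun i _ => Finset.sum_nonneg fun k _ => sq_nonneg _ : (0:ℝ) ≤ ∑ i, ∑ k, A i k ^ 2)]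
        rfl

lemma fromRows_sub (A₁ B₁ : Matrix α γ ℝ) (A₂ B₂ : Matrix β γ ℝ) :
    fromRows A₁ A₂ - fromRows B₁ B₂ = fromRows (A₁ - B₁) (A₂ - B₂) := by
  ext (i | i) j <;> simp

lemma frob_fromRows_sq (A : Matrix α γ ℝ) (B : Matrix β γ ℝ) :
    frob (fromRows A B) ^ 2 = frob A ^ 2 + frob B ^ 2 := by
  rw [frob_sq, frob_sq, frob_sq, Fintype.sum_sum_type]
  simp

lemma vnorm_sum_elim_sq (a : α → ℝ) (b : β → ℝ) :
    vnorm (Sum.elim a b) ^ 2 = vnorm a ^ 2 + vnorm b ^ 2 := by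
  rw [vnorm_sq, vnorm_sq, vnorm_sq, Fintype.sum_sum_type]
  simp

lemma vnorm_orth {R : Matrix γ γ ℝ} [DecidableEq γ] (hR : Rᵀ * R = 1) (w : γ → ℝ) :
    vnorm (R.mulVec w) = vnorm w := by
  have h1 : (R.mulVec w) ⬝ᵥ (R.mulVec w) = w ⬝ᵥ w := by
    rw [Matrix.dotProduct_mulVec, ← Matrix.mulVec_transpose, Matrix.mulVec_mulVec, hR,
      Matrix.one_mulVec]
  have h2 : ∑ i, (R.mulVec w i) ^ 2 = ∑ i, w i ^ 2 := by
    simpa [dotProduct, pow_two] using h1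
  simp [vnorm, h2]

lemma vnorm_le_elim_left (a : α → ℝ) (b : β → ℝ) : vnorm a ≤ vnorm (Sum.elim a b) := by
  nlinarith [vnorm_sum_elim_sq a b, vnorm_nonneg a, vnorm_nonneg (Sum.elim a b),
    vnorm_nonneg b, sq_nonneg (vnorm b)]

lemma vnorm_le_elim_right (a : α → ℝ) (b : β → ℝ) : vnorm b ≤ vnorm (Sum.elim a b) := by
  nlinarith [vnorm_sum_elim_sq a b, vnorm_nonneg b, vnorm_nonneg (Sum.elim a b),
    vnorm_nonneg a, sq_nonneg (vnorm a)]

lemma core_bound {n₁ n₂ r : ℕ}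
    (U X : Matrix (Fin n₁) (Fin r) ℝ) (V Y : Matrix (Fin n₂) (Fin r) ℝ)
    {op : ℝ} (hop : 0 ≤ op)
    (hZ : ∀ w : Fin r → ℝ, vnorm ((fromRows X Y).mulVec w) ≤ op * vnorm w)
    (R : Matrix (Fin r) (Fin r) ℝ) (hR : Rᵀ * R = 1) :
    frob (U * Vᵀ - X * Yᵀ) ≤
      Real.sqrt 2 * op * frob (fromRows U V - fromRows X Y * R)
        + frob (fromRows U V - fromRows X Y * R) ^ 2 / 2 := by
  have hRR' : R * Rᵀ = 1 := mul_eq_one_comm.mp hR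
  have hd : fromRows U V - fromRows X Y * R = fromRows (U - X * R) (V - Y * R) := by
    rw [fromRows_mul, fromRows_sub]
  have hXY : X * R * (Y * R)ᵀ = X * Yᵀ := by
    rw [transpose_mul, ← Matrix.mul_assoc, Matrix.mul_assoc X R Rᵀ, hRR', Matrix.mul_one]
  have expand : U * Vᵀ - X * Yᵀ =
      (X * R) * (V - Y * R)ᵀ + (U - X * R) * (Y * R)ᵀ + (U - X * R) * (V - Y * R)ᵀ := by
    rw [transpose_sub, Matrix.mul_sub, Matrix.sub_mul, Matrix.sub_mul, Matrix.mul_sub, Matrix.mul_sub, hXY]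
    abel
  -- bounds for the three terms
  have hXRw : ∀ w : Fin r → ℝ, vnorm ((X * R).mulVec w) ≤ op * vnorm w := by
    intro w
    rw [← Matrix.mulVec_mulVec]
    calc vnorm (X.mulVec (R.mulVec w))
        ≤ vnorm ((fromRows X Y).mulVec (R.mulVec w)) := by
          rw [fromRows_mulVec]; exact vnorm_le_elim_left _ _
      _ ≤ op * vnorm (R.mulVec w) := hZ _
      _ = op * vnorm w := by rw [vnorm_orth hR]
  have hYRw : ∀ w : Fin r → ℝ, vnorm ((Y * R).mulVec w) ≤ op * vnorm w := by
    intro w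
    rw [← Matrix.mulVec_mulVec]
    calc vnorm (Y.mulVec (R.mulVec w))
        ≤ vnorm ((fromRows X Y).mulVec (R.mulVec w)) := by
          rw [fromRows_mulVec]; exact vnorm_le_elim_right _ _
      _ ≤ op * vnorm (R.mulVec w) := hZ _
      _ = op * vnorm w := by rw [vnorm_orth hR]
  have hT1 : frob ((X * R) * (V - Y * R)ᵀ) ≤ op * frob (V - Y * R) :=
    frob_mul_transpose_le_op _ _ hop hXRw
  have hT2 : frob ((U - X * R) * (Y * R)ᵀ) ≤ op * frob (U - X * R) := by
    have he : ((Y * R) * (U - X * R)ᵀ)ᵀ = (U - X * R) * (Y * R)ᵀ := by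
      rw [transpose_mul, transpose_transpose]
    calc frob ((U - X * R) * (Y * R)ᵀ) = frob ((Y * R) * (U - X * R)ᵀ) := by
          rw [← he, frob_transpose]
      _ ≤ op * frob (U - X * R) := frob_mul_transpose_le_op _ _ hop hYRw
  have hT3 : frob ((U - X * R) * (V - Y * R)ᵀ) ≤ frob (U - X * R) * frob (V - Y * R) :=
    frob_mul_transpose_le_frob _ _
  have htri : frob (U * Vᵀ - X * Yᵀ) ≤
      frob ((X * R) * (V - Y * R)ᵀ) + frob ((U - X * R) * (Y * R)ᵀ)
        + frob ((U - X * R) * (V - Y * R)ᵀ) := by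
    rw [expand]
    calc frob ((X * R) * (V - Y * R)ᵀ + (U - X * R) * (Y * R)ᵀ + (U - X * R) * (V - Y * R)ᵀ)
        ≤ frob ((X * R) * (V - Y * R)ᵀ + (U - X * R) * (Y * R)ᵀ)
          + frob ((U - X * R) * (V - Y * R)ᵀ) := frob_add_le _ _
      _ ≤ _ := by
          have := frob_add_le ((X * R) * (V - Y * R)ᵀ) ((U - X * R) * (Y * R)ᵀ)
          linarith
  set a := frob (U - X * R) with ha
  set b := frob (V - Y * R) with hb
  set d := frob (fromRows U V - fromRows X Y * R) with hdd
  have ha0 : 0 ≤ a := frob_nonneg _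
  have hb0 : 0 ≤ b := frob_nonneg _
  have hd0 : 0 ≤ d := frob_nonneg _
  have habd : a ^ 2 + b ^ 2 = d ^ 2 := by
    rw [hdd, hd, frob_fromRows_sq]
  have hs0 : (0:ℝ) ≤ Real.sqrt 2 := Real.sqrt_nonneg 2
  have hs2 : Real.sqrt 2 ^ 2 = 2 := Real.sq_sqrt (by norm_num)
  have hab : a + b ≤ Real.sqrt 2 * d := by
    nlinarith [sq_nonneg (a - b), mul_nonneg hs0 hd0, sq_nonneg (Real.sqrt 2 * d - (a + b))]
  have hab2 : a * b ≤ d ^ 2 / 2 := by nlinarith [sq_nonneg (a - b)]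
  have hmono : op * (a + b) ≤ op * (Real.sqrt 2 * d) := mul_le_mul_of_nonneg_left hab hop
  nlinarith [htri, hT1, hT2, hT3]

lemma final_numeric {F op p : ℝ} (hop : 0 ≤ op) (hp0 : 0 ≤ p) (hq : p ≤ 1 / 4 * op)
    (key : ∀ ε : ℝ, 0 < ε → F ≤ Real.sqrt 2 * op * (p + ε) + (p + ε) ^ 2 / 2) :
    F ≤ 9 / (4 * Real.sqrt 2) * op * p := by
  have hs0 : (0:ℝ) ≤ Real.sqrt 2 := Real.sqrt_nonneg 2
  have hs2 : Real.sqrt 2 ^ 2 = 2 := Real.sq_sqrt (by norm_num)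
  have hs1 : (1:ℝ) ≤ Real.sqrt 2 := by
    rw [show (1:ℝ) = Real.sqrt 1 from (Real.sqrt_one).symm]
    exact Real.sqrt_le_sqrt (by norm_num)
  have main : F ≤ Real.sqrt 2 * op * p + p ^ 2 / 2 := by
    by_contra hcon
    push_neg at hcon
    have hε' : 0 < F - (Real.sqrt 2 * op * p + p ^ 2 / 2) := by linarith
    have hC : 0 < Real.sqrt 2 * op + p + 1 := by nlinarith [mul_nonneg hs0 hop]
    set ε' : ℝ := F - (Real.sqrt 2 * op * p + p ^ 2 / 2) with hε'def
    have hεpos : 0 < min 1 (ε' / (2 * (Real.sqrt 2 * op + p + 1))) :=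
      lt_min one_pos (div_pos hε' (by linarith))
    set ε : ℝ := min 1 (ε' / (2 * (Real.sqrt 2 * op + p + 1))) with hεdef
    have hε1 : ε ≤ 1 := min_le_left _ _
    have hεsq : ε ^ 2 ≤ ε := by nlinarith
    have hk := key ε hεpos
    have h3 : Real.sqrt 2 * op * (p + ε) + (p + ε) ^ 2 / 2 ≤
        (Real.sqrt 2 * op * p + p ^ 2 / 2) + ε * (Real.sqrt 2 * op + p + 1) := by
      nlinarith [hεsq, hεpos.le]
    have h4 : ε * (Real.sqrt 2 * op + p + 1) ≤ ε' / 2 := by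
      have h2 : ε ≤ ε' / (2 * (Real.sqrt 2 * op + p + 1)) := min_le_right _ _
      calc ε * (Real.sqrt 2 * op + p + 1)
          ≤ (ε' / (2 * (Real.sqrt 2 * op + p + 1))) * (Real.sqrt 2 * op + p + 1) :=
            mul_le_mul_of_nonneg_right h2 (by linarith)
        _ = ε' / 2 := by field_simp
    linarith
  have hpsq : p ^ 2 ≤ op * p / 4 := by nlinarith
  have hfrac : 9 / (4 * Real.sqrt 2) = 9 * Real.sqrt 2 / 8 := by
    rw [div_eq_div_iff (by positivity) (by norm_num)]
    nlinarith
  rw [hfrac]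
  nlinarith [mul_nonneg (by linarith : (0:ℝ) ≤ Real.sqrt 2 - 1) (mul_nonneg hop hp0)]


/-- Bounding ‖UVᵀ − XYᵀ‖_F by dist of the lifted factors. -/
theorem lifted_frob_diff_le_dist {n₁ n₂ r : ℕ}
    (U X : Matrix (Fin n₁) (Fin r) ℝ) (V Y : Matrix (Fin n₂) (Fin r) ℝ)
    (h : pdist (Matrix.fromRows U V) (Matrix.fromRows X Y) ≤
      (1 / 4) * opNorm (Matrix.fromRows X Y)) :
    frob (U * Vᵀ - X * Yᵀ) ≤
      (9 / (4 * Real.sqrt 2)) * opNorm (Matrix.fromRows X Y) *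
        pdist (Matrix.fromRows U V) (Matrix.fromRows X Y) := by
  have hSne : { d : ℝ | ∃ R : Matrix (Fin r) (Fin r) ℝ, Rᵀ * R = 1 ∧
      d = frob (Matrix.fromRows U V - Matrix.fromRows X Y * R) }.Nonempty :=
    ⟨frob (Matrix.fromRows U V - Matrix.fromRows X Y * 1), 1,
      by simp [Matrix.transpose_one], rfl⟩
  have hp0 : 0 ≤ pdist (Matrix.fromRows U V) (Matrix.fromRows X Y) :=
    Real.sInf_nonneg fun x hx => by obtain ⟨R, _, rfl⟩ := hx; exact frob_nonneg _
  have hop : 0 ≤ opNorm (Matrix.fromRows X Y) := by linarith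
  have hZw : ∀ w : Fin r → ℝ,
      vnorm ((Matrix.fromRows X Y).mulVec w) ≤ opNorm (Matrix.fromRows X Y) * vnorm w :=
    fun w => vnorm_mulVec_le_opNorm _ w
  refine final_numeric hop hp0 h ?_
  intro ε hε
  obtain ⟨d, hdS, hdlt⟩ := Real.lt_sInf_add_pos hSne hε
  obtain ⟨R, hR, rfl⟩ := hdS
  have hcore := core_bound U X V Y hop hZw R hR
  have hd0 : 0 ≤ frob (Matrix.fromRows U V - Matrix.fromRows X Y * R) := frob_nonneg _
  have hdlt' : frob (Matrix.fromRows U V - Matrix.fromRows X Y * R) <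
      pdist (Matrix.fromRows U V) (Matrix.fromRows X Y) + ε := hdlt
  have hs0 : (0:ℝ) ≤ Real.sqrt 2 := Real.sqrt_nonneg 2
  have h1 : Real.sqrt 2 * opNorm (Matrix.fromRows X Y) *
      frob (Matrix.fromRows U V - Matrix.fromRows X Y * R) ≤
      Real.sqrt 2 * opNorm (Matrix.fromRows X Y) *
        (pdist (Matrix.fromRows U V) (Matrix.fromRows X Y) + ε) :=
    mul_le_mul_of_nonneg_left hdlt'.le (mul_nonneg hs0 hop)
  have h2 : frob (Matrix.fromRows U V - Matrix.fromRows X Y * R) ^ 2 ≤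
      (pdist (Matrix.fromRows U V) (Matrix.fromRows X Y) + ε) ^ 2 := by nlinarith
  linarith
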